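/- Let X ⊂ ℝ^d (d ≥ 1) be a compact convex set with nonempty interior such that X ⊆ B(x₀, R) for some x₀ and R > 0, and let S be the random-direction kernel on X. Then for every x ∈ X and every measurable set A ⊆ X, S(x, A) ≥ ∫_A (c_d · ‖u − x‖^{d-1} · 2R)^{-1} du, where the integral is with respect to d-dimensional Lebesgue measure and c_d = 2π^{d/2}/Γ(d/2) is the surface area of the unit sphere S^{d-1}. -/

import Mathlib

open MeasureTheory
open scoped ENNReal

/-- The uniform probability measure `ν_{x,e}` on the chord `{x + t·e : t ∈ ℝ} ∩ X` of `X`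
through `x` in direction `e` (a unit vector): the pushforward under `t ↦ x + t·e` of the
normalized Lebesgue measure on `{t : x + t·e ∈ X}`, or the Dirac mass at `x` if the chord
is degenerate. -/
noncomputable def chordMeasure {d : ℕ} (X : Set (EuclideanSpace ℝ (Fin d)))
    (e x : EuclideanSpace ℝ (Fin d)) : Measure (EuclideanSpace ℝ (Fin d)) :=
  if volume {t : ℝ | x + t • e ∈ X} = 0 then Measure.dirac x
  else (volume {t : ℝ | x + t • e ∈ X})⁻¹ •
    Measure.map (fun t : ℝ => x + t • e) (volume.restrict {t : ℝ | x + t • e ∈ X})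

/-- The uniform (rotation-invariant) probability measure `σ` on the unit sphere
`S^{d-1} ⊂ ℝ^d`, obtained by normalizing the sphere measure induced by Lebesgue measure. -/
noncomputable def sphereUniform (d : ℕ) :
    Measure (Metric.sphere (0 : EuclideanSpace ℝ (Fin d)) 1) :=
  ((volume : Measure (EuclideanSpace ℝ (Fin d))).toSphere Set.univ)⁻¹ •
    (volume : Measure (EuclideanSpace ℝ (Fin d))).toSphere

lemma chord_lb {d : ℕ} (X : Set (EuclideanSpace ℝ (Fin d)))
    (x₀ : EuclideanSpace ℝ (Fin d)) (R : ℝ) (hR : 0 < R)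
    (hout : X ⊆ Metric.closedBall x₀ R)
    (e : EuclideanSpace ℝ (Fin d)) (he : ‖e‖ = 1)
    (x : EuclideanSpace ℝ (Fin d))
    (A : Set (EuclideanSpace ℝ (Fin d))) (hAX : A ⊆ X) (hA : MeasurableSet A) :
    (ENNReal.ofReal (2 * R))⁻¹ * volume {t : ℝ | x + t • e ∈ A}
      ≤ chordMeasure X e x A := by
  have hf : Measurable fun t : ℝ => x + t • e :=
    (measurable_id.smul_const e).const_add x
  have hsub : {t : ℝ | x + t • e ∈ A} ⊆ {t : ℝ | x + t • e ∈ X} :=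
    fun t ht => hAX ht
  rw [chordMeasure]
  split_ifs with h0
  · have : volume {t : ℝ | x + t • e ∈ A} = 0 := measure_mono_null hsub h0
    simp [this]
  · have hTle : volume {t : ℝ | x + t • e ∈ X} ≤ ENNReal.ofReal (2 * R) := by
      refine (Real.volume_le_diam _).trans (EMetric.diam_le ?_)
      intro s hs t ht
      rw [edist_dist]
      refine ENNReal.ofReal_le_ofReal ?_
      have : dist (x + s • e) (x + t • e) ≤ 2 * R := by
        calc dist (x + s • e) (x + t • e)
            ≤ dist (x + s • e) x₀ + dist x₀ (x + t • e) := dist_triangle _ _ _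
          _ ≤ R + R := add_le_add (hout hs) (by rw [dist_comm]; exact hout ht)
          _ = 2 * R := by ring
      calc dist s t = ‖(x + s • e) - (x + t • e)‖ := by
            rw [show (x + s • e) - (x + t • e) = (s - t) • e by module,
              norm_smul, he, mul_one, Real.dist_eq, Real.norm_eq_abs]
        _ ≤ 2 * R := by rw [← dist_eq_norm]; exact this
    rw [Measure.smul_apply, smul_eq_mul, Measure.map_apply hf hA,
      Measure.restrict_apply (hf hA)]
    have heq : (fun t : ℝ => x + t • e) ⁻¹' A ∩ {t : ℝ | x + t • e ∈ X}
        = {t : ℝ | x + t • e ∈ A} := Set.inter_eq_left.2 hsub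
    rw [heq]
    exact mul_le_mul_left (ENNReal.inv_le_inv.2 hTle) _

lemma toSphere_univ_eq {d : ℕ} (hd : 1 ≤ d) :
    (volume : Measure (EuclideanSpace ℝ (Fin d))).toSphere Set.univ
      = ENNReal.ofReal (2 * Real.pi ^ ((d : ℝ) / 2) / Real.Gamma ((d : ℝ) / 2)) := by
  haveI : Nonempty (Fin d) := ⟨⟨0, hd⟩⟩
  have hd0 : (0 : ℝ) < (d : ℝ) / 2 := by positivity
  rw [Measure.toSphere_apply_univ, EuclideanSpace.volume_ball, finrank_euclideanSpace,
    Fintype.card_fin]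
  have h1 : (ENNReal.ofReal (1:ℝ)) ^ d = 1 := by simp
  rw [h1, one_mul]
  rw [show ((d : ℝ≥0∞)) = ENNReal.ofReal (d : ℝ) by simp, ← ENNReal.ofReal_mul (by positivity)]
  congr 1
  have hsq : Real.sqrt Real.pi ^ d = Real.pi ^ ((d : ℝ) / 2) := by
    rw [Real.sqrt_eq_rpow, ← Real.rpow_natCast (Real.pi ^ ((1:ℝ)/2)) d,
      ← Real.rpow_mul Real.pi_pos.le]
    norm_num
    congr 1
    ring
  have hG : Real.Gamma ((d : ℝ) / 2 + 1) = ((d : ℝ) / 2) * Real.Gamma ((d : ℝ) / 2) :=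
    Real.Gamma_add_one hd0.ne'
  rw [hsq, hG]
  have hGpos : 0 < Real.Gamma ((d : ℝ) / 2) := Real.Gamma_pos_of_pos hd0
  have hdne : (d : ℝ) ≠ 0 := by positivity
  field_simp

lemma polar_eq {d : ℕ} (hd : 1 ≤ d) (x : EuclideanSpace ℝ (Fin d))
    (A : Set (EuclideanSpace ℝ (Fin d))) (hA : MeasurableSet A)
    (c R : ℝ) (hc : 0 < c) (hR : 0 < R) :
    ∫⁻ u in A, ENNReal.ofReal ((c * ‖u - x‖ ^ (d - 1) * (2 * R))⁻¹) ∂volume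
      = ENNReal.ofReal ((c * (2 * R))⁻¹) *
        ∫⁻ e : Metric.sphere (0 : EuclideanSpace ℝ (Fin d)) 1,
          volume ({t : ℝ | x + t • (e : EuclideanSpace ℝ (Fin d)) ∈ A} ∩ Set.Ioi 0)
          ∂((volume : Measure (EuclideanSpace ℝ (Fin d))).toSphere) := by
  haveI : Nonempty (Fin d) := ⟨⟨0, hd⟩⟩
  haveI : Nontrivial (EuclideanSpace ℝ (Fin d)) :=
    Module.nontrivial_of_finrank_pos (R := ℝ)
      (by rw [finrank_euclideanSpace_fin]; omega)
  set B : Set (EuclideanSpace ℝ (Fin d)) := (· + x) ⁻¹' A with hBdef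
  set h : EuclideanSpace ℝ (Fin d) → ℝ≥0∞ :=
    fun v => ENNReal.ofReal ((c * ‖v‖ ^ (d - 1) * (2 * R))⁻¹) with hh
  set F : EuclideanSpace ℝ (Fin d) → ℝ≥0∞ := B.indicator h with hF
  have hB : MeasurableSet B := hA.preimage (measurable_add_const x)
  have hhm : Measurable h := by
    apply ENNReal.measurable_ofReal.comp
    exact ((continuous_const.mul (continuous_norm.pow (d - 1))).mul
      continuous_const).measurable.inv
  have hFm : Measurable F := hhm.indicator hB
  have step1 : ∫⁻ u in A,
        ENNReal.ofReal ((c * ‖u - x‖ ^ (d - 1) * (2 * R))⁻¹) ∂volume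
      = ∫⁻ v, F v ∂volume := by
    rw [← lintegral_indicator hA]
    rw [← lintegral_add_right_eq_self
      (fun u => A.indicator
        (fun u => ENNReal.ofReal ((c * ‖u - x‖ ^ (d - 1) * (2 * R))⁻¹)) u) x]
    refine lintegral_congr fun v => ?_
    by_cases hv : v + x ∈ A
    · rw [Set.indicator_of_mem hv, hF, Set.indicator_of_mem (show v ∈ B from hv)]
      simp only [hh, add_sub_cancel_right]
    · rw [Set.indicator_of_notMem hv, hF,
        Set.indicator_of_notMem (show v ∉ B from hv)]
  have hmp := (volume :
    Measure (EuclideanSpace ℝ (Fin d))).measurePreserving_homeomorphUnitSphereProd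
  rw [show Module.finrank ℝ (EuclideanSpace ℝ (Fin d)) = d
    from finrank_euclideanSpace_fin] at hmp
  have step2 : ∫⁻ v, F v ∂volume
      = ∫⁻ p : Metric.sphere (0 : EuclideanSpace ℝ (Fin d)) 1 × Set.Ioi (0 : ℝ),
          F ((p.2 : ℝ) • (p.1 : EuclideanSpace ℝ (Fin d)))
          ∂((volume : Measure (EuclideanSpace ℝ (Fin d))).toSphere.prod
              (Measure.volumeIoiPow (d - 1))) := by
    conv_lhs => rw [← restrict_compl_singleton
        (μ := (volume : Measure (EuclideanSpace ℝ (Fin d)))) (0 : EuclideanSpace ℝ (Fin d))]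
    rw [← lintegral_subtype_comap
        (measurableSet_singleton (0 : EuclideanSpace ℝ (Fin d))).compl]
    rw [← hmp.lintegral_comp_emb (Homeomorph.measurableEmbedding _)
      (fun p => F ((p.2 : ℝ) • (p.1 : EuclideanSpace ℝ (Fin d))))]
    refine lintegral_congr fun v => ?_
    congr 1
    rw [← homeomorphUnitSphereProd_symm_apply_coe]
    rw [Homeomorph.symm_apply_apply]
  have step3 : ∫⁻ p : Metric.sphere (0 : EuclideanSpace ℝ (Fin d)) 1 × Set.Ioi (0 : ℝ),
          F ((p.2 : ℝ) • (p.1 : EuclideanSpace ℝ (Fin d)))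
          ∂((volume : Measure (EuclideanSpace ℝ (Fin d))).toSphere.prod
              (Measure.volumeIoiPow (d - 1)))
      = ∫⁻ e : Metric.sphere (0 : EuclideanSpace ℝ (Fin d)) 1,
          ∫⁻ t : Set.Ioi (0 : ℝ),
            F ((t : ℝ) • (e : EuclideanSpace ℝ (Fin d))) ∂(Measure.volumeIoiPow (d - 1))
          ∂((volume : Measure (EuclideanSpace ℝ (Fin d))).toSphere) := by
    refine lintegral_prod _ ?_
    refine (hFm.comp ?_).aemeasurable
    exact ((continuous_subtype_val.comp continuous_snd).smul
      (continuous_subtype_val.comp continuous_fst)).measurable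
  have inner : ∀ e : Metric.sphere (0 : EuclideanSpace ℝ (Fin d)) 1,
      ∫⁻ t : Set.Ioi (0 : ℝ),
          F ((t : ℝ) • (e : EuclideanSpace ℝ (Fin d))) ∂(Measure.volumeIoiPow (d - 1))
      = ENNReal.ofReal ((c * (2 * R))⁻¹) *
          volume ({t : ℝ | x + t • (e : EuclideanSpace ℝ (Fin d)) ∈ A} ∩ Set.Ioi 0) := by
    intro e
    have he : ‖(e : EuclideanSpace ℝ (Fin d))‖ = 1 := mem_sphere_zero_iff_norm.1 e.2
    have hcont : Measurable fun t : ℝ => x + t • (e : EuclideanSpace ℝ (Fin d)) := by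
      fun_prop
    have hS : MeasurableSet {t : ℝ | x + t • (e : EuclideanSpace ℝ (Fin d)) ∈ A} :=
      hcont hA
    have hdens : Measurable fun r : Set.Ioi (0 : ℝ) =>
        ENNReal.ofReal ((r : ℝ) ^ (d - 1)) := by fun_prop
    have hg : Measurable fun t : Set.Ioi (0 : ℝ) =>
        F ((t : ℝ) • (e : EuclideanSpace ℝ (Fin d))) := by
      exact hFm.comp (continuous_subtype_val.smul continuous_const).measurable
    rw [Measure.volumeIoiPow, lintegral_withDensity_eq_lintegral_mul _ hdens hg]
    have : (fun t : Set.Ioi (0:ℝ) =>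
        ((fun r : Set.Ioi (0:ℝ) => ENNReal.ofReal ((r:ℝ) ^ (d - 1))) *
          fun t : Set.Ioi (0:ℝ) => F ((t : ℝ) • (e : EuclideanSpace ℝ (Fin d)))) t)
        = fun t : Set.Ioi (0:ℝ) =>
            (fun s : ℝ => ENNReal.ofReal (s ^ (d - 1)) *
              F (s • (e : EuclideanSpace ℝ (Fin d)))) (t : ℝ) := rfl
    rw [this, lintegral_subtype_comap measurableSet_Ioi
      (fun s : ℝ => ENNReal.ofReal (s ^ (d - 1)) * F (s • (e : EuclideanSpace ℝ (Fin d))))]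
    rw [setLIntegral_congr_fun measurableSet_Ioi
      (fun ⦃s⦄ (hs : s ∈ Set.Ioi (0:ℝ)) => ?_)
      (g := fun s : ℝ => ENNReal.ofReal ((c * (2 * R))⁻¹) *
        Set.indicator {t : ℝ | x + t • (e : EuclideanSpace ℝ (Fin d)) ∈ A} 1 s)]
    · rw [lintegral_const_mul' _ _ ENNReal.ofReal_ne_top,
        lintegral_indicator_one hS, Measure.restrict_apply hS]
    · show ENNReal.ofReal (s ^ (d - 1)) * F (s • (e : EuclideanSpace ℝ (Fin d)))
          = ENNReal.ofReal ((c * (2 * R))⁻¹) *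
            Set.indicator {t : ℝ | x + t • (e : EuclideanSpace ℝ (Fin d)) ∈ A} 1 s
      have hspos : (0:ℝ) < s := hs
      have hnorm : ‖s • (e : EuclideanSpace ℝ (Fin d))‖ = s := by
        rw [norm_smul, he, mul_one, Real.norm_eq_abs, abs_of_pos hspos]
      by_cases hmem : x + s • (e : EuclideanSpace ℝ (Fin d)) ∈ A
      · have hmemB : s • (e : EuclideanSpace ℝ (Fin d)) ∈ B := by
          simp only [hBdef, Set.mem_preimage]
          rwa [add_comm]
        rw [hF, Set.indicator_of_mem hmemB,
          Set.indicator_of_mem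
            (show s ∈ {t : ℝ | x + t • (e : EuclideanSpace ℝ (Fin d)) ∈ A} from hmem), hh]
        simp only [hnorm]
        rw [← ENNReal.ofReal_mul (by positivity), Pi.one_apply, mul_one]
        congr 1
        have hsn : (0:ℝ) < s ^ (d - 1) := by positivity
        field_simp
      · have hmemB : s • (e : EuclideanSpace ℝ (Fin d)) ∉ B := by
          simp only [hBdef, Set.mem_preimage]
          rwa [add_comm]
        rw [hF, Set.indicator_of_notMem hmemB,
          Set.indicator_of_notMem
            (show s ∉ {t : ℝ | x + t • (e : EuclideanSpace ℝ (Fin d)) ∈ A} from hmem)]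
        simp
  rw [step1, step2, step3, lintegral_congr inner,
    lintegral_const_mul' _ _ ENNReal.ofReal_ne_top]

/-- **Pointwise lower density bound for the random-direction kernel.** If the compact convex
body `X ⊂ ℝ^d` satisfies `X ⊆ B(x₀, R)`, then for every `x ∈ X` and measurable `A ⊆ X`,
`S(x, A) ≥ ∫_A (c_d·‖u − x‖^{d-1}·2R)⁻¹ du`, with `c_d = 2π^{d/2}/Γ(d/2)` the surface area
of the unit sphere. -/
theorem random_direction_density_lower_bound
    {d : ℕ} (hd : 1 ≤ d) (X : Set (EuclideanSpace ℝ (Fin d)))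
    (hXc : IsCompact X) (hXconv : Convex ℝ X) (hXint : (interior X).Nonempty)
    (x₀ : EuclideanSpace ℝ (Fin d)) (R : ℝ) (hR : 0 < R)
    (hout : X ⊆ Metric.closedBall x₀ R) :
    ∀ x ∈ X, ∀ A : Set (EuclideanSpace ℝ (Fin d)), A ⊆ X → MeasurableSet A →
      ∫⁻ u in A,
          ENNReal.ofReal
            ((2 * Real.pi ^ ((d : ℝ) / 2) / Real.Gamma ((d : ℝ) / 2) *
              ‖u - x‖ ^ (d - 1) * (2 * R))⁻¹) ∂volume
        ≤ ∫⁻ e : Metric.sphere (0 : EuclideanSpace ℝ (Fin d)) 1,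
            chordMeasure X (↑e) x A ∂(sphereUniform d) := by
  intro x hx A hAX hA
  set c : ℝ := 2 * Real.pi ^ ((d : ℝ) / 2) / Real.Gamma ((d : ℝ) / 2) with hcdef
  have hc : 0 < c := by
    have : 0 < Real.Gamma ((d : ℝ) / 2) :=
      Real.Gamma_pos_of_pos (by positivity)
    positivity
  rw [polar_eq hd x A hA c R hc hR]
  have hts : (volume : Measure (EuclideanSpace ℝ (Fin d))).toSphere
      = ENNReal.ofReal c • sphereUniform d := by
    rw [sphereUniform, ← toSphere_univ_eq hd, smul_smul,
      ENNReal.mul_inv_cancel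
        (by
          rw [toSphere_univ_eq hd]
          exact (ENNReal.ofReal_pos.2 hc).ne')
        (by rw [toSphere_univ_eq hd]; exact ENNReal.ofReal_ne_top),
      one_smul]
  rw [hts, lintegral_smul_measure, smul_eq_mul, ← mul_assoc]
  have hconst : ENNReal.ofReal ((c * (2 * R))⁻¹) * ENNReal.ofReal c
      = (ENNReal.ofReal (2 * R))⁻¹ := by
    rw [← ENNReal.ofReal_mul (by positivity),
      ← ENNReal.ofReal_inv_of_pos (by positivity : (0:ℝ) < 2 * R)]
    congr 1
    field_simp
  rw [hconst,
    ← lintegral_const_mul' _ _ (ENNReal.inv_ne_top.2 (ENNReal.ofReal_pos.2 (by positivity)).ne')]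
  refine lintegral_mono fun e => ?_
  refine le_trans ?_
    (chord_lb X x₀ R hR hout (e : EuclideanSpace ℝ (Fin d))
      (mem_sphere_zero_iff_norm.1 e.2) x A hAX hA)
  exact mul_le_mul_right (measure_mono Set.inter_subset_left) _
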